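/- Let P(λ) ∈ ℂ^{n×n}[λ] be block upper-triangular with diagonal blocks P_{11}(λ), ..., P_{mm}(λ), each hyperstable with respect to D ⊆ ℂ. Then P(λ) is hyperstable with respect to D. -/

import Mathlib

/-- `P` is hyperstable with respect to `D` (general finite index type). -/
def Hyperstable {ι : Type} [Fintype ι] [DecidableEq ι]
    (P : ℂ → Matrix ι ι ℂ) (D : Set ℂ) : Prop :=
  ∀ x : ι → ℂ, x ≠ 0 → ∃ y : ι → ℂ, y ≠ 0 ∧
    ∀ μ ∈ D, dotProduct (star y) ((P μ).mulVec x) ≠ 0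

theorem stmt3 {m : ℕ} (k : Fin m → ℕ)
    (P : Matrix (Σ i : Fin m, Fin (k i)) (Σ i : Fin m, Fin (k i)) (Polynomial ℂ))
    (D : Set ℂ)
    (htri : ∀ (i j : Fin m) (a : Fin (k i)) (b : Fin (k j)), j < i → P ⟨i, a⟩ ⟨j, b⟩ = 0)
    (hdiag : ∀ i : Fin m,
      Hyperstable (fun μ => Matrix.of fun a b : Fin (k i) =>
        Polynomial.eval μ (P ⟨i, a⟩ ⟨i, b⟩)) D) :
    Hyperstable (fun μ => P.map (Polynomial.eval μ)) D := by
  classical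
  intro x hx
  have hex : ∃ i : Fin m, ∃ a, x ⟨i, a⟩ ≠ 0 := by
    by_contra h
    push_neg at h
    exact hx (funext fun p => h p.1 p.2)
  set S : Finset (Fin m) := Finset.univ.filter (fun i => ∃ a, x ⟨i, a⟩ ≠ 0) with hSdef
  have hS : S.Nonempty := by
    obtain ⟨i, hi⟩ := hex
    exact ⟨i, by simp [hSdef, hi]⟩
  set i₀ := S.max' hS with hi₀
  have hi₀mem : i₀ ∈ S := S.max'_mem hS
  have hxblock : ∃ a, x ⟨i₀, a⟩ ≠ 0 := by simpa [hSdef] using hi₀mem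
  have hzero : ∀ j : Fin m, i₀ < j → ∀ b : Fin (k j), x ⟨j, b⟩ = 0 := by
    intro j hj b
    by_contra hb
    have hjS : j ∈ S := by simp only [hSdef, Finset.mem_filter, Finset.mem_univ, true_and]; exact ⟨b, hb⟩
    exact absurd (S.le_max' j hjS) (not_le.mpr hj)
  set xi : Fin (k i₀) → ℂ := fun a => x ⟨i₀, a⟩ with hxi_def
  have hxi : xi ≠ 0 := by
    obtain ⟨a, ha⟩ := hxblock
    exact fun h => ha (congrFun h a)
  obtain ⟨yi, hyi, hprop⟩ := hdiag i₀ xi hxi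
  set y : (Σ i : Fin m, Fin (k i)) → ℂ :=
    fun p => if h : p.1 = i₀ then yi (h ▸ p.2) else 0 with hy_def
  refine ⟨y, ?_, ?_⟩
  · obtain ⟨a, ha⟩ : ∃ a, yi a ≠ 0 := by
      by_contra h
      push_neg at h
      exact hyi (funext h)
    intro h
    have h2 := congrFun h ⟨i₀, a⟩
    simp [hy_def] at h2
    exact ha h2
  · intro μ hμ
    have key : dotProduct (star y) ((P.map (Polynomial.eval μ)).mulVec x)
        = dotProduct (star yi)
          ((Matrix.of fun a b : Fin (k i₀) => Polynomial.eval μ (P ⟨i₀, a⟩ ⟨i₀, b⟩)).mulVec xi) := by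
      rw [dotProduct, ← Finset.univ_sigma_univ, Finset.sum_sigma]
      rw [Finset.sum_eq_single i₀]
      · rw [dotProduct]
        refine Finset.sum_congr rfl fun a _ => ?_
        have hy : y ⟨i₀, a⟩ = yi a := by simp [hy_def]
        rw [Pi.star_apply, Pi.star_apply, hy]
        congr 1
        rw [Matrix.mulVec, dotProduct, Matrix.mulVec, dotProduct,
          ← Finset.univ_sigma_univ, Finset.sum_sigma]
        rw [Finset.sum_eq_single i₀]
        · refine Finset.sum_congr rfl fun b _ => ?_
          simp [Matrix.map_apply, hxi_def]
        · intro j _ hj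
          rcases lt_or_gt_of_ne hj with hlt | hgt
          · -- j < i₀ : P block is zero
            refine Finset.sum_eq_zero fun b _ => ?_
            rw [Matrix.map_apply, htri i₀ j a b hlt]
            simp
          · refine Finset.sum_eq_zero fun b _ => ?_
            rw [hzero j hgt b, mul_zero]
        · intro h; exact absurd (Finset.mem_univ i₀) h
      · intro j _ hj
        refine Finset.sum_eq_zero fun a _ => ?_
        have : y ⟨j, a⟩ = 0 := by simp [hy_def, hj]
        rw [Pi.star_apply, this, star_zero, zero_mul]
      · intro h; exact absurd (Finset.mem_univ i₀) h
    rw [key]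
    exact hprop μ hμ
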